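/- Let β_0, …, β_{n−1} and α_0, …, α_n be complex numbers and set N_E(z) = β_0 + β_1 z + … + β_{n−1} z^{n−1} and D_E(z) = α_0 + α_1 z + … + α_n z^n. Then the polynomials N_f = z·B_n^{♯n}·N_E + A_n·D_E and D_f = z·A_n^{♯n}·N_E + B_n·D_E both have degree at most n if and only if for every ℓ with 0 ≤ ℓ ≤ n−1: Σ_{j=0}^{n−ℓ−1} ( conj(b_{n−ℓ−j−1})·β_{n−j−1} + a_{ℓ+j+1}·α_{n−j} ) = 0. (This is the degree condition of Theorem 1.3: it expresses that the parameter coefficients satisfy (β_{n−1}, …, β_0)ᵀ = −B̃^{−1}A·(α_n, …, α_1)ᵀ, so that f = T_Θ[E] solves the problem RSP_{n,n}.) -/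

import Mathlib

open Polynomial

/-- The pair `(A_j, B_j)` of polynomials from the recursion (1.8a):
`A_0 = γ_n`, `B_0 = 1`, `A_{j+1}(z) = z·A_j(z) + γ_{n-j-1}·B_j(z)`,
`B_{j+1}(z) = z·conj(γ_{n-j-1})·A_j(z) + B_j(z)`. -/
noncomputable def schurAB (γ : ℕ → ℂ) (n : ℕ) : ℕ → Polynomial ℂ × Polynomial ℂ
  | 0 => (C (γ n), 1)
  | j + 1 =>
      (X * (schurAB γ n j).1 + C (γ (n - j - 1)) * (schurAB γ n j).2,
       X * C (starRingEnd ℂ (γ (n - j - 1))) * (schurAB γ n j).1 + (schurAB γ n j).2)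

/-- The reflection `P^{♯k}`: the coefficient of `z^j` is `conj` of the coefficient of
`z^{k-j}` of `P`, i.e. `P^{♯k}(z) = z^k · conj(P(1/conj z))` for `P` of degree ≤ k. -/
noncomputable def sharp (k : ℕ) (P : Polynomial ℂ) : Polynomial ℂ :=
  ∑ j ∈ Finset.range (k + 1), C (starRingEnd ℂ (P.coeff (k - j))) * X ^ j

private lemma coeff_sum_C_X (f : ℕ → ℂ) (m i : ℕ) :
    (∑ j ∈ Finset.range m, C (f j) * X ^ j).coeff i = if i < m then f i else 0 := by
  rw [finset_sum_coeff]
  simp only [coeff_C_mul, coeff_X_pow, mul_ite, mul_one, mul_zero]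
  rw [Finset.sum_ite_eq (Finset.range m) i f]
  simp [Finset.mem_range]

private lemma coeff_sharp (k : ℕ) (P : Polynomial ℂ) (i : ℕ) :
    (sharp k P).coeff i = if i ≤ k then starRingEnd ℂ (P.coeff (k - i)) else 0 := by
  unfold sharp
  rw [coeff_sum_C_X (fun j => starRingEnd ℂ (P.coeff (k - j))) (k+1) i]
  simp only [Nat.lt_succ_iff]

private lemma natDegree_sharp_le (k : ℕ) (P : Polynomial ℂ) : (sharp k P).natDegree ≤ k := by
  rw [natDegree_le_iff_coeff_eq_zero]
  intro m hm
  rw [coeff_sharp, if_neg (by omega)]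

private lemma schur_deg (γ : ℕ → ℂ) (n : ℕ) :
    ∀ j, (schurAB γ n j).1.natDegree ≤ j ∧ (schurAB γ n j).2.natDegree ≤ j
  | 0 => by constructor <;> simp [schurAB, natDegree_C]
  | j + 1 => by
    obtain ⟨h1, h2⟩ := schur_deg γ n j
    constructor
    · refine le_trans (natDegree_add_le _ _) (max_le ?_ ?_)
      · refine le_trans natDegree_mul_le ?_
        simp only [natDegree_X]; omega
      · refine le_trans natDegree_mul_le ?_
        simp only [natDegree_C]; omega
    · refine le_trans (natDegree_add_le _ _) (max_le ?_ ?_)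
      · refine le_trans natDegree_mul_le (le_trans (add_le_add natDegree_mul_le le_rfl) ?_)
        simp only [natDegree_X, natDegree_C]; omega
      · omega

private lemma schur_B_coeff_zero (γ : ℕ → ℂ) (n : ℕ) :
    ∀ j, (schurAB γ n j).2.coeff 0 = 1
  | 0 => by simp [schurAB]
  | j + 1 => by
    have ih := schur_B_coeff_zero γ n j
    simp [schurAB, mul_assoc, mul_coeff_zero, coeff_X_zero, ih]

private lemma sharp_C_mul (k : ℕ) (c : ℂ) (P : Polynomial ℂ) :
    sharp k (C c * P) = C (starRingEnd ℂ c) * sharp k P := by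
  unfold sharp
  rw [Finset.mul_sum]
  refine Finset.sum_congr rfl fun j _ => ?_
  rw [coeff_C_mul, map_mul, C_mul, mul_assoc]

private lemma sharp_rec (j : ℕ) (P Q : Polynomial ℂ) (c : ℂ)
    (hP : P.natDegree ≤ j) (hQ : Q.natDegree ≤ j) :
    sharp (j + 1) (X * P + C c * Q)
      = sharp j P + C (starRingEnd ℂ c) * (X * sharp j Q) := by
  ext i
  simp only [coeff_add, coeff_C_mul, coeff_sharp]
  rcases i with _ | i
  · have hQ0 : Q.coeff (j + 1) = 0 := coeff_eq_zero_of_natDegree_lt (by omega)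
    simp [coeff_X_mul, hQ0, mul_coeff_zero, coeff_X_zero]
  · rw [coeff_X_mul, coeff_sharp]
    rcases Nat.lt_trichotomy i j with hlt | heq | hgt
    · rw [if_pos (by omega), if_pos (by omega), if_pos (by omega),
        show j + 1 - (i + 1) = (j - (i + 1)) + 1 by omega, coeff_X_mul,
        show j - (i + 1) + 1 = j - i by omega, map_add, map_mul]
    · subst heq
      rw [if_pos (by omega), if_neg (by omega), if_pos (by omega), Nat.sub_self]
      simp [mul_coeff_zero, coeff_X_zero, Nat.sub_self]
    · rw [if_neg (by omega), if_neg (by omega), if_neg (by omega)]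
      simp

private lemma sharp_schur_A (γ : ℕ → ℂ) (n j : ℕ) :
    sharp (j + 1) (schurAB γ n (j + 1)).1
      = sharp j (schurAB γ n j).1
        + C (starRingEnd ℂ (γ (n - j - 1))) * (X * sharp j (schurAB γ n j).2) := by
  have h := schur_deg γ n j
  exact sharp_rec j _ _ _ h.1 h.2

private lemma sharp_schur_B (γ : ℕ → ℂ) (n j : ℕ) :
    sharp (j + 1) (schurAB γ n (j + 1)).2
      = C (γ (n - j - 1)) * sharp j (schurAB γ n j).1
        + X * sharp j (schurAB γ n j).2 := by
  have h := schur_deg γ n j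
  have heq : (schurAB γ n (j + 1)).2
      = X * (C (starRingEnd ℂ (γ (n - j - 1))) * (schurAB γ n j).1) + C 1 * (schurAB γ n j).2 := by
    show X * C (starRingEnd ℂ (γ (n - j - 1))) * (schurAB γ n j).1 + (schurAB γ n j).2 = _
    rw [C_1, one_mul, mul_assoc]
  rw [heq, sharp_rec j _ _ _ (le_trans natDegree_mul_le (by simp only [natDegree_C]; omega)) h.2,
    sharp_C_mul, map_one, C_1, one_mul, Complex.conj_conj]

private lemma schur_det (γ : ℕ → ℂ) (n : ℕ) :
    ∀ j, ∃ c : ℂ, (schurAB γ n j).2 * sharp j (schurAB γ n j).2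
        - (schurAB γ n j).1 * sharp j (schurAB γ n j).1 = C c * X ^ j
  | 0 => by
    refine ⟨1 - γ n * starRingEnd ℂ (γ n), ?_⟩
    have h1 : sharp 0 (1 : Polynomial ℂ) = 1 := by simp [sharp]
    have h2 : sharp 0 (C (γ n)) = C (starRingEnd ℂ (γ n)) := by simp [sharp]
    show (1 : Polynomial ℂ) * sharp 0 1 - C (γ n) * sharp 0 (C (γ n)) = _
    rw [h1, h2, map_sub, map_one, map_mul, pow_zero]
    ring
  | j + 1 => by
    obtain ⟨c, hc⟩ := schur_det γ n j
    refine ⟨(1 - γ (n - j - 1) * starRingEnd ℂ (γ (n - j - 1))) * c, ?_⟩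
    have hA := sharp_schur_A γ n j
    have hB := sharp_schur_B γ n j
    simp only [show (schurAB γ n (j + 1)).1
        = X * (schurAB γ n j).1 + C (γ (n - j - 1)) * (schurAB γ n j).2 from rfl,
      show (schurAB γ n (j + 1)).2
        = X * C (starRingEnd ℂ (γ (n - j - 1))) * (schurAB γ n j).1 + (schurAB γ n j).2 from rfl]
      at hA hB ⊢
    rw [hA, hB]
    rw [show C ((1 - γ (n - j - 1) * starRingEnd ℂ (γ (n - j - 1))) * c)
        = (1 - C (γ (n - j - 1)) * C (starRingEnd ℂ (γ (n - j - 1)))) * C c by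
      rw [map_mul, map_sub, map_one, map_mul]]
    linear_combination (X * (1 - C (γ (n - j - 1)) * C (starRingEnd ℂ (γ (n - j - 1))))) * hc

/-- with `N_E = Σ_{j<n} β_j z^j` and `D_E = Σ_{j≤n} α_j z^j`, the
polynomials `N_f = z·B_n^{♯n}·N_E + A_n·D_E` and `D_f = z·A_n^{♯n}·N_E + B_n·D_E` both
have degree at most `n` if and only if for every `0 ≤ ℓ ≤ n-1`:
`Σ_{j=0}^{n-ℓ-1} ( conj(b_{n-ℓ-j-1})·β_{n-j-1} + a_{ℓ+j+1}·α_{n-j} ) = 0`,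
where `a_j`, `b_j` are the coefficients of `A_n`, `B_n`. -/
theorem stmt_16 (n : ℕ) (hn : 1 ≤ n) (γ : ℕ → ℂ)
    (hγ : ∀ j ≤ n, ‖γ j‖ < 1)
    (a b : ℕ → ℂ) (ha : ∀ j, a j = ((schurAB γ n n).1).coeff j)
    (hb : ∀ j, b j = ((schurAB γ n n).2).coeff j)
    (β α : ℕ → ℂ)
    (NE DE : Polynomial ℂ)
    (hNE : NE = ∑ j ∈ Finset.range n, C (β j) * X ^ j)
    (hDE : DE = ∑ j ∈ Finset.range (n + 1), C (α j) * X ^ j) :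
    ((X * sharp n (schurAB γ n n).2 * NE + (schurAB γ n n).1 * DE).natDegree ≤ n ∧
     (X * sharp n (schurAB γ n n).1 * NE + (schurAB γ n n).2 * DE).natDegree ≤ n) ↔
    ∀ ℓ < n, ∑ j ∈ Finset.range (n - ℓ),
      (starRingEnd ℂ (b (n - ℓ - j - 1)) * β (n - j - 1) + a (ℓ + j + 1) * α (n - j)) = 0 := by
  set A := (schurAB γ n n).1 with hA
  set B := (schurAB γ n n).2 with hB
  have hAdeg : A.natDegree ≤ n := (schur_deg γ n n).1
  have hBdeg : B.natDegree ≤ n := (schur_deg γ n n).2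
  have hNEc : ∀ i, NE.coeff i = if i < n then β i else 0 := fun i => by
    rw [hNE]; exact coeff_sum_C_X β n i
  have hDEc : ∀ i, DE.coeff i = if i < n + 1 then α i else 0 := fun i => by
    rw [hDE]; exact coeff_sum_C_X α (n+1) i
  have hNEdeg : NE.natDegree ≤ n - 1 := by
    rw [natDegree_le_iff_coeff_eq_zero]
    intro m hm
    rw [hNEc, if_neg (by omega)]
  have hDEdeg : DE.natDegree ≤ n := by
    rw [natDegree_le_iff_coeff_eq_zero]
    intro m hm
    rw [hDEc, if_neg (by omega)]
  -- the key coefficient computation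
  have hNfc : ∀ ℓ, ℓ < n → (X * sharp n B * NE + A * DE).coeff (n + 1 + ℓ)
      = ∑ j ∈ Finset.range (n - ℓ),
          (starRingEnd ℂ (b (n - ℓ - j - 1)) * β (n - j - 1) + a (ℓ + j + 1) * α (n - j)) := by
    intro ℓ hℓ
    rw [coeff_add]
    have h1 : (X * sharp n B * NE).coeff (n + 1 + ℓ)
        = ∑ j ∈ Finset.range (n - ℓ), starRingEnd ℂ (b (n - ℓ - j - 1)) * β (n - j - 1) := by
      rw [mul_assoc, show n + 1 + ℓ = (n + ℓ) + 1 by omega, coeff_X_mul, coeff_mul,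
        Finset.Nat.sum_antidiagonal_eq_sum_range_succ
          (fun x y => (sharp n B).coeff x * NE.coeff y) (n + ℓ)]
      have hsub : Finset.Ico (ℓ+1) (n+1) ⊆ Finset.range (n + ℓ + 1) := by
        intro x hx
        simp only [Finset.mem_Ico] at hx
        exact Finset.mem_range.mpr (by omega)
      have hzero : ∀ x ∈ Finset.range (n + ℓ + 1), x ∉ Finset.Ico (ℓ+1) (n+1) →
          (sharp n B).coeff x * NE.coeff (n + ℓ - x) = 0 := by
        intro x hx hx2
        simp only [Finset.mem_range] at hx
        simp only [Finset.mem_Ico, not_and, not_lt] at hx2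
        by_cases hxl : ℓ + 1 ≤ x
        · have : n + 1 ≤ x := hx2 hxl
          rw [coeff_sharp, if_neg (by omega), zero_mul]
        · rw [hNEc, if_neg (by omega), mul_zero]
      rw [← Finset.sum_subset hsub hzero, Finset.sum_Ico_eq_sum_range,
        show n + 1 - (ℓ + 1) = n - ℓ by omega]
      refine Finset.sum_congr rfl fun i hi => ?_
      simp only [Finset.mem_range] at hi
      rw [coeff_sharp, if_pos (by omega), show n - (ℓ + 1 + i) = n - ℓ - i - 1 by omega,
        show n + ℓ - (ℓ + 1 + i) = n - i - 1 by omega, hNEc, if_pos (by omega), hb]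
    have h2 : (A * DE).coeff (n + 1 + ℓ)
        = ∑ j ∈ Finset.range (n - ℓ), a (ℓ + j + 1) * α (n - j) := by
      rw [coeff_mul, Finset.Nat.sum_antidiagonal_eq_sum_range_succ
          (fun x y => A.coeff x * DE.coeff y) (n + 1 + ℓ)]
      have hsub : Finset.Ico (ℓ+1) (n+1) ⊆ Finset.range (n + 1 + ℓ + 1) := by
        intro x hx
        simp only [Finset.mem_Ico] at hx
        exact Finset.mem_range.mpr (by omega)
      have hzero : ∀ x ∈ Finset.range (n + 1 + ℓ + 1), x ∉ Finset.Ico (ℓ+1) (n+1) →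
          A.coeff x * DE.coeff (n + 1 + ℓ - x) = 0 := by
        intro x hx hx2
        simp only [Finset.mem_range] at hx
        simp only [Finset.mem_Ico, not_and, not_lt] at hx2
        by_cases hxl : ℓ + 1 ≤ x
        · have : n + 1 ≤ x := hx2 hxl
          rw [coeff_eq_zero_of_natDegree_lt (by omega : A.natDegree < x), zero_mul]
        · rw [hDEc, if_neg (by omega), mul_zero]
      rw [← Finset.sum_subset hsub hzero, Finset.sum_Ico_eq_sum_range,
        show n + 1 - (ℓ + 1) = n - ℓ by omega]
      refine Finset.sum_congr rfl fun i hi => ?_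
      simp only [Finset.mem_range] at hi
      rw [ha, show ℓ + 1 + i = ℓ + i + 1 by omega,
        show n + 1 + ℓ - (ℓ + i + 1) = n - i by omega, hDEc, if_pos (by omega)]
    rw [h1, h2, Finset.sum_add_distrib]
  constructor
  · intro h ℓ hℓ
    rw [← hNfc ℓ hℓ]
    exact coeff_eq_zero_of_natDegree_lt (lt_of_le_of_lt h.1 (by omega))
  · intro hS
    have hNfdeg2n : (X * sharp n B * NE + A * DE).natDegree ≤ n + n := by
      refine le_trans (natDegree_add_le _ _) (max_le ?_ ?_)
      · refine le_trans natDegree_mul_le (le_trans (add_le_add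
          (le_trans natDegree_mul_le (add_le_add natDegree_X_le (natDegree_sharp_le n B)))
          hNEdeg) ?_)
        omega
      · exact le_trans natDegree_mul_le (add_le_add hAdeg hDEdeg)
    have hNfdeg : (X * sharp n B * NE + A * DE).natDegree ≤ n := by
      rw [natDegree_le_iff_coeff_eq_zero]
      intro m hm
      rcases le_or_gt m (n + n) with hle | hgt
      · rw [show m = n + 1 + (m - n - 1) by omega, hNfc (m - n - 1) (by omega)]
        exact hS (m - n - 1) (by omega)
      · exact coeff_eq_zero_of_natDegree_lt (lt_of_le_of_lt hNfdeg2n hgt)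
    refine ⟨hNfdeg, ?_⟩
    obtain ⟨c, hc⟩ := schur_det γ n n
    rw [← hA, ← hB] at hc
    have key : (X * sharp n A * NE + B * DE) * sharp n B
        = (X * sharp n B * NE + A * DE) * sharp n A + (C c * X ^ n) * DE := by
      rw [← hc]; ring
    have hsBcoeff : (sharp n B).coeff n = 1 := by
      rw [coeff_sharp, if_pos le_rfl, Nat.sub_self, schur_B_coeff_zero γ n n, map_one]
    have hsBne : sharp n B ≠ 0 := fun h => by simp [h] at hsBcoeff
    have hsBdeg : (sharp n B).natDegree = n :=
      le_antisymm (natDegree_sharp_le n B)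
        (le_natDegree_of_ne_zero (by rw [hsBcoeff]; exact one_ne_zero))
    by_cases hDf : (X * sharp n A * NE + B * DE) = 0
    · rw [hDf]; simp
    · have h1 : ((X * sharp n A * NE + B * DE) * sharp n B).natDegree
          = (X * sharp n A * NE + B * DE).natDegree + n := by
        rw [natDegree_mul hDf hsBne, hsBdeg]
      have h2 : ((X * sharp n A * NE + B * DE) * sharp n B).natDegree ≤ n + n := by
        rw [key]
        refine le_trans (natDegree_add_le _ _) (max_le ?_ ?_)
        · exact le_trans natDegree_mul_le (add_le_add hNfdeg (natDegree_sharp_le n A))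
        · calc (C c * X ^ n * DE).natDegree
              ≤ (C c * X ^ n).natDegree + DE.natDegree := natDegree_mul_le
            _ ≤ n + n := by
                have hcx : (C c * X ^ n).natDegree ≤ n :=
                  le_trans natDegree_mul_le (by simp [natDegree_C, natDegree_X_pow])
                omega
      omega
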